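/- For every integer n ≥ 1 and every continuous function f : [0,1] → ℝ, the polynomials L_n^ρ f converge uniformly on [0,1], as ρ → ∞, to L_n f, the Lagrange interpolation polynomial of f at the n+1 equidistant nodes 0, 1/n, …, (n−1)/n, 1. -/

import Mathlib

open MeasureTheory

/-- Euler Beta function `B(a,b) = ∫₀¹ t^(a-1) (1-t)^(b-1) dt`. -/
noncomputable def betaFn (a b : ℝ) : ℝ :=
  ∫ t in (0:ℝ)..1, t ^ (a - 1) * (1 - t) ^ (b - 1)

/-- The functionals `F_{n,k}^ρ`. -/
noncomputable def Ffun (n k : ℕ) (ρ : ℝ) (f : ℝ → ℝ) : ℝ :=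
  if k = 0 then f 0
  else if k = n then f 1
  else (betaFn ((k : ℝ) * ρ) (((n : ℝ) - (k : ℝ)) * ρ))⁻¹ *
    ∫ t in (0:ℝ)..1, t ^ ((k : ℝ) * ρ - 1) * (1 - t) ^ (((n : ℝ) - (k : ℝ)) * ρ - 1) * f t

/-- Bernstein basis polynomial `p_{n,k}(x)`. -/
noncomputable def bern (n k : ℕ) (x : ℝ) : ℝ :=
  (n.choose k : ℝ) * x ^ k * (1 - x) ^ (n - k)

/-- The operator `U_n^ρ`. -/
noncomputable def Uop (n : ℕ) (ρ : ℝ) (f : ℝ → ℝ) (x : ℝ) : ℝ :=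
  ∑ k ∈ Finset.range (n + 1), Ffun n k ρ f * bern n k x

lemma intervalIntegrable_dens {a b : ℝ} (ha : 0 < a) (hb : 0 < b) :
    IntervalIntegrable (fun t : ℝ => t ^ (a - 1) * (1 - t) ^ (b - 1)) volume 0 1 := by
  have h := Complex.betaIntegral_convergent (u := (a : ℂ)) (v := (b : ℂ)) (by simpa) (by simpa)
  have h2 : IntervalIntegrable (fun t : ℝ =>
      ((t : ℂ) ^ ((a : ℂ) - 1) * (1 - (t : ℂ)) ^ ((b : ℂ) - 1)).re) volume 0 1 := by
    constructor
    · exact h.1.re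
    · exact h.2.re
  apply h2.congr
  rw [Set.uIoc_of_le (by norm_num : (0:ℝ) ≤ 1)]
  intro t ht
  beta_reduce
  obtain ⟨ht0, ht1⟩ := ht
  rw [show ((a:ℂ) - 1) = ((a - 1 : ℝ) : ℂ) by push_cast; ring,
    show ((b:ℂ) - 1) = ((b - 1 : ℝ) : ℂ) by push_cast; ring,
    show (1 - (t:ℂ)) = ((1 - t : ℝ) : ℂ) by push_cast; ring,
    ← Complex.ofReal_cpow ht0.le, ← Complex.ofReal_cpow (by linarith), ← Complex.ofReal_mul,
    Complex.ofReal_re]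

lemma betaFn_eq_Gamma {a b : ℝ} (ha : 0 < a) (hb : 0 < b) :
    betaFn a b = Real.Gamma a * Real.Gamma b / Real.Gamma (a + b) := by
  have key : ((betaFn a b : ℝ) : ℂ) = Complex.betaIntegral a b := by
    rw [betaFn, Complex.betaIntegral, ← intervalIntegral.integral_ofReal]
    apply intervalIntegral.integral_congr_ae
    refine Filter.Eventually.of_forall fun t ht => ?_
    rw [Set.uIoc_of_le (by norm_num : (0:ℝ) ≤ 1)] at ht
    obtain ⟨ht0, ht1⟩ := ht
    rw [show ((a:ℂ) - 1) = ((a - 1 : ℝ) : ℂ) by push_cast; ring,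
      show ((b:ℂ) - 1) = ((b - 1 : ℝ) : ℂ) by push_cast; ring,
      show (1 - (t:ℂ)) = ((1 - t : ℝ) : ℂ) by push_cast; ring,
      ← Complex.ofReal_cpow ht0.le, ← Complex.ofReal_cpow (by linarith), ← Complex.ofReal_mul]
  have hG := Complex.Gamma_mul_Gamma_eq_betaIntegral (s := (a:ℂ)) (t := (b:ℂ)) (by simpa) (by simpa)
  have hGne : Real.Gamma (a + b) ≠ 0 := (Real.Gamma_pos_of_pos (by linarith)).ne'
  have : ((Real.Gamma a * Real.Gamma b : ℝ) : ℂ) = ((Real.Gamma (a+b) : ℝ) : ℂ) * betaFn a b := by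
    rw [key]
    push_cast
    rw [← Complex.Gamma_ofReal, ← Complex.Gamma_ofReal, ← Complex.Gamma_ofReal]
    push_cast
    exact hG
  have := congrArg Complex.re this
  simp at this
  field_simp
  linarith [this]

lemma betaFn_pos {a b : ℝ} (ha : 0 < a) (hb : 0 < b) : 0 < betaFn a b := by
  rw [betaFn_eq_Gamma ha hb]
  exact div_pos (mul_pos (Real.Gamma_pos_of_pos ha) (Real.Gamma_pos_of_pos hb))
    (Real.Gamma_pos_of_pos (by linarith))

lemma betaFn_succ {a b : ℝ} (ha : 0 < a) (hb : 0 < b) :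
    betaFn (a + 1) b = (a / (a + b)) * betaFn a b := by
  rw [betaFn_eq_Gamma (by linarith) hb, betaFn_eq_Gamma ha hb, Real.Gamma_add_one ha.ne',
    show a + 1 + b = (a + b) + 1 by ring, Real.Gamma_add_one (by positivity)]
  have h1 : Real.Gamma (a + b) ≠ 0 := (Real.Gamma_pos_of_pos (by linarith)).ne'
  field_simp

lemma intervalIntegrable_dens_mul {a b : ℝ} (ha : 0 < a) (hb : 0 < b) {g : ℝ → ℝ}
    (hg : ContinuousOn g (Set.Icc 0 1)) :
    IntervalIntegrable (fun t : ℝ => t ^ (a - 1) * (1 - t) ^ (b - 1) * g t) volume 0 1 :=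
  (intervalIntegrable_dens ha hb).mul_continuousOn
    (by rwa [Set.uIcc_of_le (by norm_num : (0:ℝ) ≤ 1)])

lemma integral_dens_pow {a b : ℝ} (ha : 0 < a) (hb : 0 < b) (j : ℕ) :
    ∫ t in (0:ℝ)..1, t ^ (a - 1) * (1 - t) ^ (b - 1) * t ^ j = betaFn (a + j) b := by
  rw [betaFn]
  apply intervalIntegral.integral_congr_ae
  refine Filter.Eventually.of_forall fun t ht => ?_
  rw [Set.uIoc_of_le (by norm_num : (0:ℝ) ≤ 1)] at ht
  have h1 : t ^ (a - 1) * (t : ℝ) ^ (j : ℕ) = t ^ (a + j - 1) := by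
    rw [← Real.rpow_natCast t j, ← Real.rpow_add ht.1]
    ring_nf
  rw [mul_right_comm, h1]

lemma dens_nonneg {a b t : ℝ} (ht : t ∈ Set.Icc (0:ℝ) 1) :
    0 ≤ t ^ (a - 1) * (1 - t) ^ (b - 1) :=
  mul_nonneg (Real.rpow_nonneg ht.1 _) (Real.rpow_nonneg (by linarith [ht.2]) _)

/-- Second-moment computation: `∫ dens ⬝ (t-μ)² = betaFn a b ⬝ (stuff)`. -/
lemma integral_dens_sq {a b : ℝ} (ha : 0 < a) (hb : 0 < b) (μ : ℝ) :
    ∫ t in (0:ℝ)..1, t ^ (a - 1) * (1 - t) ^ (b - 1) * (t - μ) ^ 2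
      = betaFn a b * ((a + 1) / (a + b + 1) * (a / (a + b)) - 2 * μ * (a / (a + b)) + μ ^ 2) := by
  have I0 := intervalIntegrable_dens_mul ha hb (g := fun t => (t:ℝ) ^ (0:ℕ)) (by fun_prop)
  have I1 := intervalIntegrable_dens_mul ha hb (g := fun t => (t:ℝ) ^ (1:ℕ)) (by fun_prop)
  have I2 := intervalIntegrable_dens_mul ha hb (g := fun t => (t:ℝ) ^ (2:ℕ)) (by fun_prop)
  have key : ∫ t in (0:ℝ)..1, t ^ (a - 1) * (1 - t) ^ (b - 1) * (t - μ) ^ 2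
      = (∫ t in (0:ℝ)..1, t ^ (a - 1) * (1 - t) ^ (b - 1) * t ^ (2:ℕ))
        - 2 * μ * (∫ t in (0:ℝ)..1, t ^ (a - 1) * (1 - t) ^ (b - 1) * t ^ (1:ℕ))
        + μ ^ 2 * (∫ t in (0:ℝ)..1, t ^ (a - 1) * (1 - t) ^ (b - 1) * t ^ (0:ℕ)) := by
    rw [← intervalIntegral.integral_const_mul, ← intervalIntegral.integral_const_mul,
      ← intervalIntegral.integral_sub I2 (I1.const_mul _),
      ← intervalIntegral.integral_add (I2.sub (I1.const_mul _)) (I0.const_mul _)]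
    apply intervalIntegral.integral_congr
    intro t _
    ring
  rw [key, integral_dens_pow ha hb, integral_dens_pow ha hb, integral_dens_pow ha hb]
  have h1 : betaFn (a + 1) b = (a / (a + b)) * betaFn a b := betaFn_succ ha hb
  have h2 : betaFn (a + 2) b = ((a + 1) / (a + 1 + b)) * betaFn (a + 1) b := by
    have := betaFn_succ (a := a + 1) (b := b) (by linarith) hb
    rw [show a + (2:ℝ) = a + 1 + 1 by ring, this]
  push_cast
  rw [h2, h1, add_zero]
  ring

lemma tendsto_Fmid {n k : ℕ} (hk : 0 < k) (hkn : k < n) {g : ℝ → ℝ}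
    (hg : ContinuousOn g (Set.Icc 0 1)) :
    Filter.Tendsto (fun ρ : ℝ => (betaFn ((k:ℝ)*ρ) (((n:ℝ)-(k:ℝ))*ρ))⁻¹ *
      ∫ t in (0:ℝ)..1, t ^ ((k:ℝ)*ρ - 1) * (1-t) ^ (((n:ℝ)-(k:ℝ))*ρ - 1) * g t)
      Filter.atTop (nhds (g ((k:ℝ)/(n:ℝ)))) := by
  have hk' : (0:ℝ) < k := by exact_mod_cast hk
  have hn' : (0:ℝ) < n := by exact_mod_cast hk.trans hkn
  have hnk : (0:ℝ) < (n:ℝ) - k := by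
    have : (k:ℝ) < n := by exact_mod_cast hkn
    linarith
  set μ : ℝ := (k:ℝ)/(n:ℝ) with hμ
  have hμmem : μ ∈ Set.Icc (0:ℝ) 1 := by
    constructor
    · positivity
    · rw [hμ, div_le_one hn']; linarith
  rw [Metric.tendsto_nhds]
  intro ε hε
  obtain ⟨C, hC⟩ := (isCompact_Icc (a := (0:ℝ)) (b := 1)).exists_bound_of_continuousOn hg
  have hC0 : 0 ≤ C := le_trans (norm_nonneg _) (hC 0 (by norm_num))
  have hu := (isCompact_Icc (a := (0:ℝ)) (b := 1)).uniformContinuousOn_of_continuous hg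
  rw [Metric.uniformContinuousOn_iff] at hu
  obtain ⟨δ, hδ, hδ'⟩ := hu (ε/2) (by positivity)
  set c : ℝ := 2*C/δ^2 with hc
  have hc0 : 0 ≤ c := by positivity
  have hpt : ∀ t ∈ Set.Icc (0:ℝ) 1, |g t - g μ| ≤ ε/2 + c*(t-μ)^2 := by
    intro t ht
    by_cases h : dist t μ < δ
    · have h1 := hδ' t ht μ hμmem h
      have h2 : 0 ≤ c*(t-μ)^2 := by positivity
      rw [Real.dist_eq] at h1
      linarith
    · push_neg at h
      rw [Real.dist_eq] at h
      have h2 : δ^2 ≤ (t-μ)^2 := by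
        calc δ^2 ≤ |t-μ|^2 := pow_le_pow_left₀ hδ.le h 2
          _ = (t-μ)^2 := sq_abs _
      have h3 : 2*C ≤ c*(t-μ)^2 := by
        have h4 : c*δ^2 ≤ c*(t-μ)^2 := mul_le_mul_of_nonneg_left h2 hc0
        have h5 : c*δ^2 = 2*C := by
          rw [hc]; field_simp
        linarith
      have h6 : |g t - g μ| ≤ ‖g t‖ + ‖g μ‖ := by
        rw [← Real.norm_eq_abs]; exact norm_sub_le _ _
      have h7 := hC t ht
      have h8 := hC μ hμmem
      linarith
  -- the key quantitative bound
  have hbd : ∀ ρ : ℝ, 0 < ρ →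
      |(betaFn ((k:ℝ)*ρ) (((n:ℝ)-(k:ℝ))*ρ))⁻¹ *
        (∫ t in (0:ℝ)..1, t ^ ((k:ℝ)*ρ - 1) * (1-t) ^ (((n:ℝ)-(k:ℝ))*ρ - 1) * g t) - g μ|
      ≤ ε/2 + c * ((k:ℝ)*((n:ℝ)-(k:ℝ))/((n:ℝ)^2*((n:ℝ)*ρ+1))) := by
    intro ρ hρ
    set a : ℝ := (k:ℝ)*ρ with hadef
    set b : ℝ := ((n:ℝ)-(k:ℝ))*ρ with hbdef
    have ha : 0 < a := mul_pos hk' hρ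
    have hb : 0 < b := mul_pos hnk hρ
    have hβ := betaFn_pos ha hb
    have hIg := intervalIntegrable_dens_mul ha hb hg
    have hgc : ContinuousOn (fun t => g t - g μ) (Set.Icc (0:ℝ) 1) :=
      hg.sub continuousOn_const
    have hIgc := intervalIntegrable_dens_mul ha hb hgc
    have hsqcont : ContinuousOn (fun t : ℝ => ε/2 + c*(t-μ)^2) (Set.Icc (0:ℝ) 1) := by
      fun_prop
    have hIsq := intervalIntegrable_dens_mul ha hb hsqcont
    have e1 : ∫ t in (0:ℝ)..1, t ^ (a-1) * (1-t) ^ (b-1) * (g t - g μ)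
        = (∫ t in (0:ℝ)..1, t ^ (a-1) * (1-t) ^ (b-1) * g t) - g μ * betaFn a b := by
      rw [betaFn, ← intervalIntegral.integral_const_mul,
        ← intervalIntegral.integral_sub hIg ((intervalIntegrable_dens ha hb).const_mul (g μ))]
      apply intervalIntegral.integral_congr
      intro t _
      ring
    have e2 : |∫ t in (0:ℝ)..1, t ^ (a-1) * (1-t) ^ (b-1) * (g t - g μ)|
        ≤ ∫ t in (0:ℝ)..1, t ^ (a-1) * (1-t) ^ (b-1) * (ε/2 + c*(t-μ)^2) := by
      calc |∫ t in (0:ℝ)..1, t ^ (a-1) * (1-t) ^ (b-1) * (g t - g μ)|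
          ≤ ∫ t in (0:ℝ)..1, |t ^ (a-1) * (1-t) ^ (b-1) * (g t - g μ)| :=
            intervalIntegral.abs_integral_le_integral_abs (by norm_num)
        _ ≤ _ := by
            apply intervalIntegral.integral_mono_on (by norm_num) hIgc.abs hIsq
            intro t ht
            rw [abs_mul, abs_of_nonneg (dens_nonneg ht)]
            exact mul_le_mul_of_nonneg_left (hpt t ht) (dens_nonneg ht)
    have e3 : ∫ t in (0:ℝ)..1, t ^ (a-1) * (1-t) ^ (b-1) * (ε/2 + c*(t-μ)^2)
        = betaFn a b * (ε/2 + c * ((k:ℝ)*((n:ℝ)-(k:ℝ))/((n:ℝ)^2*((n:ℝ)*ρ+1)))) := by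
      have hIs2 := intervalIntegrable_dens_mul ha hb
        (g := fun t : ℝ => (t-μ)^2) (by fun_prop)
      have expand : ∫ t in (0:ℝ)..1, t ^ (a-1) * (1-t) ^ (b-1) * (ε/2 + c*(t-μ)^2)
          = (ε/2) * betaFn a b
            + c * ∫ t in (0:ℝ)..1, t ^ (a-1) * (1-t) ^ (b-1) * (t-μ)^2 := by
        rw [betaFn, ← intervalIntegral.integral_const_mul,
          ← intervalIntegral.integral_const_mul,
          ← intervalIntegral.integral_add ((intervalIntegrable_dens ha hb).const_mul _)
            (hIs2.const_mul _)]
        apply intervalIntegral.integral_congr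
        intro t _
        ring
      rw [expand, integral_dens_sq ha hb μ]
      have hab : a + b = (n:ℝ) * ρ := by rw [hadef, hbdef]; ring
      have hE : (a + 1) / (a + b + 1) * (a / (a + b)) - 2 * μ * (a / (a + b)) + μ ^ 2
          = (k:ℝ)*((n:ℝ)-(k:ℝ))/((n:ℝ)^2*((n:ℝ)*ρ+1)) := by
        rw [hab, hadef, hμ]
        have h1 : (n:ℝ) * ρ + 1 ≠ 0 := by positivity
        have h2 : (n:ℝ) * ρ ≠ 0 := by positivity
        have h3 : (n:ℝ) ≠ 0 := hn'.ne'
        field_simp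
        ring
      rw [hE]
      ring
    have e0 : (betaFn a b)⁻¹ * (∫ t in (0:ℝ)..1, t ^ (a-1) * (1-t) ^ (b-1) * g t) - g μ
        = (betaFn a b)⁻¹ * ∫ t in (0:ℝ)..1, t ^ (a-1) * (1-t) ^ (b-1) * (g t - g μ) := by
      rw [e1]
      field_simp
      try ring
    rw [e0, abs_mul, abs_of_pos (inv_pos.mpr hβ)]
    calc (betaFn a b)⁻¹ * |∫ t in (0:ℝ)..1, t ^ (a-1) * (1-t) ^ (b-1) * (g t - g μ)|
        ≤ (betaFn a b)⁻¹ * (betaFn a b * (ε/2 + c * ((k:ℝ)*((n:ℝ)-(k:ℝ))/((n:ℝ)^2*((n:ℝ)*ρ+1))))) := by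
          apply mul_le_mul_of_nonneg_left _ (inv_pos.mpr hβ).le
          rw [← e3]
          exact e2
      _ = ε/2 + c * ((k:ℝ)*((n:ℝ)-(k:ℝ))/((n:ℝ)^2*((n:ℝ)*ρ+1))) := by
          field_simp
  -- the variance term tends to 0
  have hV : Filter.Tendsto
      (fun ρ : ℝ => c * ((k:ℝ)*((n:ℝ)-(k:ℝ))/((n:ℝ)^2*((n:ℝ)*ρ+1))))
      Filter.atTop (nhds 0) := by
    have h1 : Filter.Tendsto (fun ρ : ℝ => (n:ℝ)*ρ+1) Filter.atTop Filter.atTop := by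
      apply Filter.tendsto_atTop_add_const_right
      exact Filter.Tendsto.const_mul_atTop hn' Filter.tendsto_id
    have h2 : Filter.Tendsto (fun ρ : ℝ => ((n:ℝ)*ρ+1)⁻¹) Filter.atTop (nhds 0) :=
      h1.inv_tendsto_atTop
    have h3 := h2.const_mul (c * ((k:ℝ)*((n:ℝ)-(k:ℝ))/((n:ℝ)^2)))
    rw [mul_zero] at h3
    apply h3.congr
    intro ρ
    field_simp
    try ring
  have hev := hV.eventually_lt_const (show (0:ℝ) < ε/2 ∧ True from ⟨by linarith, trivial⟩).1
  filter_upwards [hev, Filter.eventually_gt_atTop (0:ℝ)] with ρ h1 h2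
  rw [Real.dist_eq]
  calc |(betaFn ((k:ℝ)*ρ) (((n:ℝ)-(k:ℝ))*ρ))⁻¹ *
        (∫ t in (0:ℝ)..1, t ^ ((k:ℝ)*ρ - 1) * (1-t) ^ (((n:ℝ)-(k:ℝ))*ρ - 1) * g t) - g μ|
      ≤ ε/2 + c * ((k:ℝ)*((n:ℝ)-(k:ℝ))/((n:ℝ)^2*((n:ℝ)*ρ+1))) := hbd ρ h2
    _ < ε := by linarith

lemma Ffun_poly (n : ℕ) (hn : 1 ≤ n) (ρ : ℝ) (hρ : 0 < ρ) (p : Polynomial ℝ)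
    (hp : p.natDegree ≤ n) (k : ℕ) (hk : k ≤ n) :
    Ffun n k ρ (fun x => p.eval x)
      = ∑ j : Fin (n+1), Ffun n k ρ (fun x => x ^ (j:ℕ)) * p.coeff j := by
  have hev : ∀ x : ℝ, p.eval x = ∑ j : Fin (n+1), p.coeff j * x ^ (j:ℕ) := fun x => by
    rw [Polynomial.eval_eq_sum_range' (Nat.lt_succ_of_le hp), ← Fin.sum_univ_eq_sum_range]
  rcases eq_or_ne k 0 with h0 | h0
  · subst h0
    have hF0 : ∀ g : ℝ → ℝ, Ffun n 0 ρ g = g 0 := fun g => by rw [Ffun, if_pos rfl]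
    simp only [hF0]
    rw [hev 0]
    exact Finset.sum_congr rfl fun j _ => by ring
  rcases eq_or_ne k n with hn' | hn'
  · subst hn'
    have hFn : ∀ g : ℝ → ℝ, Ffun k k ρ g = g 1 := fun g => by
      rw [Ffun, if_neg h0, if_pos rfl]
    simp only [hFn]
    rw [hev 1]
    exact Finset.sum_congr rfl fun j _ => by ring
  · have hk0 : 0 < k := Nat.pos_of_ne_zero h0
    have hkn : k < n := lt_of_le_of_ne hk hn'
    have hkR : (0:ℝ) < k := by exact_mod_cast hk0
    have hnkR : (0:ℝ) < (n:ℝ) - k := by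
      have : (k:ℝ) < n := by exact_mod_cast hkn
      linarith
    have ha : (0:ℝ) < (k:ℝ) * ρ := mul_pos hkR hρ
    have hb : (0:ℝ) < ((n:ℝ) - k) * ρ := mul_pos hnkR hρ
    simp only [Ffun, if_neg h0, if_neg hn']
    have hint : ∀ j : Fin (n+1), IntervalIntegrable (fun t : ℝ => p.coeff j *
        (t ^ ((k:ℝ)*ρ - 1) * (1-t) ^ (((n:ℝ)-(k:ℝ))*ρ - 1) * t ^ (j:ℕ))) volume 0 1 :=
      fun j => (intervalIntegrable_dens_mul ha hb
        (g := fun t : ℝ => t ^ (j:ℕ)) (by fun_prop)).const_mul _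
    have e : ∫ t in (0:ℝ)..1, t ^ ((k:ℝ)*ρ-1) * (1-t) ^ (((n:ℝ)-(k:ℝ))*ρ-1) * p.eval t
        = ∑ j : Fin (n+1), p.coeff j *
          ∫ t in (0:ℝ)..1, t ^ ((k:ℝ)*ρ-1) * (1-t) ^ (((n:ℝ)-(k:ℝ))*ρ-1) * t ^ (j:ℕ) := by
      have e0 : ∫ t in (0:ℝ)..1, t ^ ((k:ℝ)*ρ-1) * (1-t) ^ (((n:ℝ)-(k:ℝ))*ρ-1) * p.eval t
          = ∫ t in (0:ℝ)..1, ∑ j : Fin (n+1), p.coeff j *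
            (t ^ ((k:ℝ)*ρ-1) * (1-t) ^ (((n:ℝ)-(k:ℝ))*ρ-1) * t ^ (j:ℕ)) := by
        apply intervalIntegral.integral_congr
        intro t _
        beta_reduce
        rw [hev t, Finset.mul_sum]
        exact Finset.sum_congr rfl fun j _ => by ring
      rw [e0, intervalIntegral.integral_finset_sum (fun j _ => hint j)]
      simp only [intervalIntegral.integral_const_mul]
    rw [e, Finset.mul_sum]
    exact Finset.sum_congr rfl fun j _ => by ring

lemma inv_mulVec_apply {m : ℕ} (A : Matrix (Fin m) (Fin m) ℝ) (x : Fin m → ℝ) (j : Fin m) :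
    A⁻¹.mulVec x j = (A.det)⁻¹ * ∑ k, A.adjugate j k * x k := by
  rw [Matrix.inv_def, Ring.inverse_eq_inv, Matrix.smul_mulVec, Pi.smul_apply,
    smul_eq_mul, Matrix.mulVec, dotProduct]


/-- For every `n ≥ 1` and continuous `f : [0,1] → ℝ`, the interpolation polynomials
`L_n^ρ f` converge uniformly on `[0,1]`, as `ρ → ∞`, to the Lagrange interpolation
polynomial `L_n f` of `f` at the nodes `0, 1/n, …, (n-1)/n, 1`. -/
theorem tendstoUniformlyOn_Lagrange (n : ℕ) (hn : 1 ≤ n)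
    (f : ℝ → ℝ) (hf : ContinuousOn f (Set.Icc 0 1))
    (L : ℝ → Polynomial ℝ)
    (hLdeg : ∀ ρ : ℝ, 0 < ρ → (L ρ).natDegree ≤ n)
    (hL : ∀ ρ : ℝ, 0 < ρ → ∀ k ≤ n,
      Ffun n k ρ (fun x => (L ρ).eval x) = Ffun n k ρ f)
    (Lg : Polynomial ℝ) (hLgdeg : Lg.natDegree ≤ n)
    (hLg : ∀ k ≤ n, Lg.eval ((k : ℝ) / (n : ℝ)) = f ((k : ℝ) / (n : ℝ))) :
    TendstoUniformlyOn (fun (ρ : ℝ) (x : ℝ) => (L ρ).eval x)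
      (fun x => Lg.eval x) Filter.atTop (Set.Icc 0 1) := by
  have hn0 : (0:ℝ) < n := by exact_mod_cast hn
  set v : Fin (n+1) → ℝ := fun k => ((k:ℕ):ℝ)/(n:ℝ) with hv
  set V : Matrix (Fin (n+1)) (Fin (n+1)) ℝ := Matrix.vandermonde v with hV
  set M : ℝ → Matrix (Fin (n+1)) (Fin (n+1)) ℝ :=
    fun ρ k j => Ffun n (k:ℕ) ρ (fun x => x ^ (j:ℕ)) with hM
  -- V is invertible
  have hinj : Function.Injective v := by
    intro i j h
    rw [hv] at h
    field_simp at h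
    exact Fin.ext (by exact_mod_cast h)
  have hVdet : V.det ≠ 0 := Matrix.det_vandermonde_ne_zero_iff.mpr hinj
  have hVunit : IsUnit V.det := isUnit_iff_ne_zero.mpr hVdet
  -- the linear systems
  have hMeq : ∀ ρ : ℝ, 0 < ρ →
      (M ρ).mulVec (fun j : Fin (n+1) => (L ρ).coeff (j:ℕ)) = fun k : Fin (n+1) => Ffun n (k:ℕ) ρ f := by
    intro ρ hρ
    funext k
    rw [Matrix.mulVec, dotProduct, ← hL ρ hρ (k:ℕ) (Nat.lt_succ_iff.mp k.isLt),
      Ffun_poly n hn ρ hρ (L ρ) (hLdeg ρ hρ) (k:ℕ) (Nat.lt_succ_iff.mp k.isLt)]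
  have hVeq : V.mulVec (fun j : Fin (n+1) => Lg.coeff (j:ℕ)) = fun k : Fin (n+1) => f (v k) := by
    funext k
    rw [Matrix.mulVec, dotProduct, ← hLg (k:ℕ) (Nat.lt_succ_iff.mp k.isLt),
      Polynomial.eval_eq_sum_range' (Nat.lt_succ_of_le hLgdeg), ← Fin.sum_univ_eq_sum_range]
    exact Finset.sum_congr rfl fun j _ => by rw [hV, Matrix.vandermonde_apply]; ring
  -- limits of matrices and vectors
  have hMlim : Filter.Tendsto M Filter.atTop (nhds V) := by
    refine tendsto_pi_nhds.mpr ?_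
    intro k
    rw [tendsto_pi_nhds]
    intro j
    rcases eq_or_ne (k:ℕ) 0 with h0 | h0
    · have he : (fun ρ => M ρ k j) = fun _ => (0:ℝ) ^ (j:ℕ) := by
        funext ρ; simp [hM, Ffun, h0, (by ext; simpa using h0 : k = 0)]
      rw [he]
      have : V k j = (0:ℝ) ^ (j:ℕ) := by
        rw [hV, Matrix.vandermonde_apply, hv]; simp [h0]
      rw [this]
      exact tendsto_const_nhds
    rcases eq_or_ne (k:ℕ) n with hnn | hnn
    · have he : (fun ρ => M ρ k j) = fun _ => (1:ℝ) ^ (j:ℕ) := by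
        funext ρ; simp [hM, Ffun, hnn, Nat.one_le_iff_ne_zero.mp hn]
        intro hk; simp [hk] at h0
      rw [he]
      have : V k j = (1:ℝ) ^ (j:ℕ) := by
        rw [hV, Matrix.vandermonde_apply, hv]; simp [hnn, div_self hn0.ne']
      rw [this]
      exact tendsto_const_nhds
    · have hk0 : 0 < (k:ℕ) := Nat.pos_of_ne_zero h0
      have hkn : (k:ℕ) < n := lt_of_le_of_ne (Nat.lt_succ_iff.mp k.isLt) hnn
      have h := tendsto_Fmid hk0 hkn (g := fun x : ℝ => x ^ (j:ℕ)) (by fun_prop)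
      have he : (fun ρ => M ρ k j) = fun ρ : ℝ =>
          (betaFn (((k:ℕ):ℝ)*ρ) (((n:ℝ)-((k:ℕ):ℝ))*ρ))⁻¹ *
          ∫ t in (0:ℝ)..1, t ^ (((k:ℕ):ℝ)*ρ - 1) * (1-t) ^ (((n:ℝ)-((k:ℕ):ℝ))*ρ - 1) * t ^ (j:ℕ) := by
        funext ρ; simp only [hM, Ffun, if_neg h0, if_neg hnn]
      rw [he]
      have : V k j = (((k:ℕ):ℝ)/(n:ℝ)) ^ (j:ℕ) := by
        rw [hV, Matrix.vandermonde_apply, hv]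
      rw [this]
      exact h
  have hblim : Filter.Tendsto (fun ρ => (fun k : Fin (n+1) => Ffun n (k:ℕ) ρ f))
      Filter.atTop (nhds (fun k => f (v k))) := by
    rw [tendsto_pi_nhds]
    intro k
    rcases eq_or_ne (k:ℕ) 0 with h0 | h0
    · have he : (fun ρ => Ffun n (k:ℕ) ρ f) = fun _ => f 0 := by
        funext ρ; simp [Ffun, h0]
      rw [he]
      have : f (v k) = f 0 := by rw [hv]; simp [h0]
      rw [this]
      exact tendsto_const_nhds
    rcases eq_or_ne (k:ℕ) n with hnn | hnn
    · have he : (fun ρ => Ffun n (k:ℕ) ρ f) = fun _ => f 1 := by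
        funext ρ; simp [Ffun, hnn, Nat.one_le_iff_ne_zero.mp hn]
      rw [he]
      have : f (v k) = f 1 := by rw [hv]; simp [hnn, div_self hn0.ne']
      rw [this]
      exact tendsto_const_nhds
    · have hk0 : 0 < (k:ℕ) := Nat.pos_of_ne_zero h0
      have hkn : (k:ℕ) < n := lt_of_le_of_ne (Nat.lt_succ_iff.mp k.isLt) hnn
      have h := tendsto_Fmid hk0 hkn hf
      have he : (fun ρ => Ffun n (k:ℕ) ρ f) = fun ρ : ℝ =>
          (betaFn (((k:ℕ):ℝ)*ρ) (((n:ℝ)-((k:ℕ):ℝ))*ρ))⁻¹ *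
          ∫ t in (0:ℝ)..1, t ^ (((k:ℕ):ℝ)*ρ - 1) * (1-t) ^ (((n:ℝ)-((k:ℕ):ℝ))*ρ - 1) * f t := by
        funext ρ; simp only [Ffun, if_neg h0, if_neg hnn]
      rw [he]
      exact h
  have hdetlim : Filter.Tendsto (fun ρ => (M ρ).det) Filter.atTop (nhds V.det) :=
    ((Continuous.matrix_det continuous_id).tendsto V).comp hMlim
  have hadjlim : Filter.Tendsto (fun ρ => (M ρ).adjugate) Filter.atTop (nhds V.adjugate) :=
    ((Continuous.matrix_adjugate continuous_id).tendsto V).comp hMlim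
  have hevne : ∀ᶠ ρ in Filter.atTop, (M ρ).det ≠ 0 := hdetlim.eventually_ne hVdet
  -- coefficient convergence
  have hcoefflim : ∀ j : Fin (n+1),
      Filter.Tendsto (fun ρ => (L ρ).coeff (j:ℕ)) Filter.atTop (nhds (Lg.coeff (j:ℕ))) := by
    intro j
    have hform : Filter.Tendsto
        (fun ρ => ((M ρ).det)⁻¹ * ∑ k, (M ρ).adjugate j k * Ffun n (k:ℕ) ρ f)
        Filter.atTop (nhds ((V.det)⁻¹ * ∑ k, V.adjugate j k * f (v k))) := by
      apply (hdetlim.inv₀ hVdet).mul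
      apply tendsto_finset_sum
      intro k _
      exact (tendsto_pi_nhds.mp (tendsto_pi_nhds.mp hadjlim j) k).mul
        (tendsto_pi_nhds.mp hblim k)
    have hlimval : (V.det)⁻¹ * ∑ k, V.adjugate j k * f (v k) = Lg.coeff (j:ℕ) := by
      rw [← inv_mulVec_apply, ← hVeq, Matrix.mulVec_mulVec, Matrix.nonsing_inv_mul V hVunit,
        Matrix.one_mulVec]
    rw [hlimval] at hform
    apply hform.congr'
    filter_upwards [hevne, Filter.eventually_gt_atTop (0:ℝ)] with ρ hne hρ
    have hu : IsUnit (M ρ).det := isUnit_iff_ne_zero.mpr hne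
    have hc : (fun j : Fin (n+1) => (L ρ).coeff (j:ℕ))
        = (M ρ)⁻¹.mulVec (fun k => Ffun n (k:ℕ) ρ f) := by
      rw [← hMeq ρ hρ, Matrix.mulVec_mulVec, Matrix.nonsing_inv_mul _ hu, Matrix.one_mulVec]
    calc ((M ρ).det)⁻¹ * ∑ k, (M ρ).adjugate j k * Ffun n (k:ℕ) ρ f
        = (M ρ)⁻¹.mulVec (fun k => Ffun n (k:ℕ) ρ f) j := (inv_mulVec_apply _ _ j).symm
      _ = (L ρ).coeff (j:ℕ) := by rw [← hc]
  -- uniform convergence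
  have hsum : Filter.Tendsto (fun ρ => ∑ j : Fin (n+1), |(L ρ).coeff (j:ℕ) - Lg.coeff (j:ℕ)|)
      Filter.atTop (nhds 0) := by
    have h0 : ∀ j : Fin (n+1), Filter.Tendsto (fun ρ => |(L ρ).coeff (j:ℕ) - Lg.coeff (j:ℕ)|)
        Filter.atTop (nhds 0) := by
      intro j
      have := ((hcoefflim j).sub_const (Lg.coeff (j:ℕ))).abs
      rwa [sub_self, abs_zero] at this
    have := tendsto_finset_sum (Finset.univ : Finset (Fin (n+1))) (fun j _ => h0 j)
    simpa using this
  rw [Metric.tendstoUniformlyOn_iff]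
  intro ε hε
  filter_upwards [hsum.eventually_lt_const hε, Filter.eventually_gt_atTop (0:ℝ)] with ρ h1 hρ
  intro x hx
  rw [Real.dist_eq]
  have hex : ∀ p : Polynomial ℝ, p.natDegree ≤ n →
      p.eval x = ∑ j : Fin (n+1), p.coeff (j:ℕ) * x ^ (j:ℕ) := fun p hp => by
    rw [Polynomial.eval_eq_sum_range' (Nat.lt_succ_of_le hp), ← Fin.sum_univ_eq_sum_range]
  calc |Lg.eval x - (L ρ).eval x|
      = |∑ j : Fin (n+1), (Lg.coeff (j:ℕ) - (L ρ).coeff (j:ℕ)) * x ^ (j:ℕ)| := by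
        rw [hex Lg hLgdeg, hex (L ρ) (hLdeg ρ hρ), ← Finset.sum_sub_distrib]
        congr 1
        exact Finset.sum_congr rfl fun j _ => by ring
    _ ≤ ∑ j : Fin (n+1), |(Lg.coeff (j:ℕ) - (L ρ).coeff (j:ℕ)) * x ^ (j:ℕ)| :=
        Finset.abs_sum_le_sum_abs _ _
    _ ≤ ∑ j : Fin (n+1), |(L ρ).coeff (j:ℕ) - Lg.coeff (j:ℕ)| := by
        apply Finset.sum_le_sum
        intro j _
        rw [abs_mul, abs_sub_comm]
        have hxj : |x ^ (j:ℕ)| ≤ 1 := by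
          rw [abs_pow]
          apply pow_le_one₀ (abs_nonneg x)
          rw [abs_of_nonneg hx.1]
          exact hx.2
        exact mul_le_of_le_one_right (abs_nonneg _) hxj
    _ < ε := h1
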